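/- Failure of (k,ε)-stability for the inner product: Let ε ∈ (0,1) and let m = ⌊1/ε⌋. There exist a finite-dimensional real inner product space H of dimension 2^(m+1) − 2 and vectors x_1,…,x_{2^m}, y_1,…,y_{2^m} in the closed unit ball of H such that ⟪x_i, y_j⟫ − ⟪x_j, y_i⟫ ≥ ε for all 1 ≤ i < j ≤ 2^m. In particular, the inner product on the unit ball is not (k,ε)-stable for k ≤ 2^(⌊1/ε⌋) = exp((log 2)·⌊1/ε⌋). -/

import Mathlib

open RealInnerProductSpace Finset

/-- The sibling of `n`: flip the lowest bit. -/
private def sib (n : ℕ) : ℕ := if n % 2 = 0 then n + 1 else n - 1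

private lemma sib_div_two (n : ℕ) : sib n / 2 = n / 2 := by
  unfold sib; split <;> omega

private lemma sib_sib (n : ℕ) : sib (sib n) = n := by
  unfold sib; split_ifs <;> omega

private lemma sib_ne (n : ℕ) : sib n ≠ n := by
  unfold sib; split <;> omega

private lemma sib_of_even {u : ℕ} (hu : u % 2 = 0) : sib (u + 1) = u := by
  unfold sib; split <;> omega

private lemma sib_of_even' {u : ℕ} (hu : u % 2 = 0) : sib u = u + 1 := by
  unfold sib; split <;> omega

private lemma div_step {i j s : ℕ} (h : i / 2 ^ s = sib (j / 2 ^ s)) :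
    i / 2 ^ (s + 1) = j / 2 ^ (s + 1) := by
  have h2 := congrArg (· / 2) h
  simp only [sib_div_two] at h2
  simpa [Nat.div_div_eq_div_mul, ← pow_succ] using h2

private lemma div_eq_of_ge {i j s t : ℕ} (h : i / 2 ^ s = j / 2 ^ s) (hst : s ≤ t) :
    i / 2 ^ t = j / 2 ^ t := by
  obtain ⟨d, rfl⟩ := Nat.exists_eq_add_of_le hst
  rw [pow_add, ← Nat.div_div_eq_div_mul, ← Nat.div_div_eq_div_mul, h]

private lemma sib_uniq {i j s t : ℕ} (hs : i / 2 ^ s = sib (j / 2 ^ s))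
    (ht : i / 2 ^ t = sib (j / 2 ^ t)) : s = t := by
  by_contra hne
  wlog h : s < t generalizing s t
  · exact this ht hs (Ne.symm hne) (by omega)
  have heq : i / 2 ^ t = j / 2 ^ t := div_eq_of_ge (div_step hs) (by omega)
  exact sib_ne (j / 2 ^ t) (heq.symm.trans ht).symm

private lemma exists_sib : ∀ m i j : ℕ, j < 2 ^ m → i < j →
    ∃ s < m, j / 2 ^ s = i / 2 ^ s + 1 ∧ i / 2 ^ s % 2 = 0 := by
  intro m
  induction m with
  | zero => intro i j hj hij; omega
  | succ m ih =>
    intro i j hj hij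
    have e : ∀ n s : ℕ, n / 2 / 2 ^ s = n / 2 ^ (s + 1) := fun n s => by
      rw [Nat.div_div_eq_div_mul, ← pow_succ']
    rcases lt_trichotomy (i / 2) (j / 2) with h | h | h
    · have hj2 : j / 2 < 2 ^ m := by
        have : (2 : ℕ) ^ (m + 1) = 2 * 2 ^ m := by ring
        omega
      obtain ⟨s, hs, h1, h2⟩ := ih (i / 2) (j / 2) hj2 h
      rw [e, e] at h1
      rw [e] at h2
      exact ⟨s + 1, by omega, h1, h2⟩
    · refine ⟨0, by omega, ?_, ?_⟩ <;> simp only [pow_zero, Nat.div_one] <;> omega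
    · have := Nat.div_le_div_right (c := 2) hij.le
      omega

/-- Failure of `(2^⌊1/ε⌋, ε)`-stability for the inner product on the unit ball. -/
theorem inner_product_not_stable (ε : ℝ) (hε : ε ∈ Set.Ioo (0 : ℝ) 1) :
    ∃ x y : Fin (2 ^ ⌊1 / ε⌋₊) → EuclideanSpace ℝ (Fin (2 ^ (⌊1 / ε⌋₊ + 1) - 2)),
      (∀ i, ‖x i‖ ≤ 1) ∧ (∀ i, ‖y i‖ ≤ 1) ∧
      ∀ i j : Fin (2 ^ ⌊1 / ε⌋₊), i < j →
        ε ≤ ⟪x i, y j⟫ - ⟪x j, y i⟫ := by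
  classical
  obtain ⟨hε0, hε1⟩ := hε
  set m := ⌊1 / ε⌋₊ with hmdef
  have hm1 : 1 ≤ m := by
    have h1 : (1 : ℝ) ≤ 1 / ε := one_le_one_div hε0 hε1.le
    exact_mod_cast Nat.le_floor (by exact_mod_cast h1)
  have hmε : (m : ℝ) ≤ 1 / ε := Nat.floor_le (by positivity)
  have hmpos : (0 : ℝ) < m := by exact_mod_cast hm1
  set D := 2 ^ (m + 1) - 2 with hD
  set c : ℝ := (Real.sqrt m)⁻¹ with hc
  have hcpos : 0 < c := by positivity
  have hc2 : c ^ 2 = 1 / (m : ℝ) := by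
    rw [hc, inv_pow, Real.sq_sqrt hmpos.le, one_div]
  -- decoding of coordinates
  set lA : Fin D → ℕ := fun a => Nat.log2 (a.1 + 2) with hlA
  set pA : Fin D → ℕ := fun a => a.1 + 2 - 2 ^ lA a with hpA
  have hDlt : ∀ a : Fin D, a.1 + 2 < 2 ^ (m + 1) := by
    intro a
    have := a.2
    have h2 : (2 : ℕ) ≤ 2 ^ (m + 1) := Nat.one_lt_two_pow (by omega)
    omega
  have hlow : ∀ a : Fin D, 2 ^ lA a ≤ a.1 + 2 := fun a => Nat.log2_self_le (by omega)
  have hhigh : ∀ a : Fin D, a.1 + 2 < 2 ^ (lA a + 1) := fun a => Nat.lt_log2_self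
  have hlA_le : ∀ a : Fin D, lA a ≤ m := by
    intro a
    have h := (Nat.log2_lt (n := a.1 + 2) (by omega)).mpr (hDlt a)
    show Nat.log2 (a.1 + 2) ≤ m
    omega
  have hlA_ge : ∀ a : Fin D, 1 ≤ lA a := by
    intro a
    rcases Nat.eq_zero_or_pos (lA a) with h | h
    · have := hhigh a; rw [h] at this; norm_num at this; omega
    · exact h
  have hpA_lt : ∀ a : Fin D, pA a < 2 ^ lA a := by
    intro a
    have h1 := hlow a
    have h2 := hhigh a
    have h3 : (2 : ℕ) ^ (lA a + 1) = 2 * 2 ^ lA a := by ring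
    simp only [hpA]
    omega
  have ha_eq : ∀ a : Fin D, a.1 + 2 = 2 ^ lA a + pA a := by
    intro a; have := hlow a; simp only [hpA]; omega
  -- encoding
  have encode : ∀ l u : ℕ, 1 ≤ l → l ≤ m → u < 2 ^ l →
      ∃ a : Fin D, lA a = l ∧ pA a = u := by
    intro l u hl1 hlm hu
    have h1 : 2 ^ l + u < 2 ^ (l + 1) := by
      have : (2 : ℕ) ^ (l + 1) = 2 * 2 ^ l := by ring
      omega
    have h2 : (2 : ℕ) ^ (l + 1) ≤ 2 ^ (m + 1) := Nat.pow_le_pow_right (by norm_num) (by omega)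
    have h2l : (2 : ℕ) ≤ 2 ^ l := by
      calc (2 : ℕ) = 2 ^ 1 := by norm_num
      _ ≤ 2 ^ l := Nat.pow_le_pow_right (by norm_num) hl1
    refine ⟨⟨2 ^ l + u - 2, by omega⟩, ?_, ?_⟩
    · have hval : (⟨2 ^ l + u - 2, by omega⟩ : Fin D).1 + 2 = 2 ^ l + u := by
        simp; omega
      have hge : ¬ (Nat.log2 (2 ^ l + u) < l) := by
        rw [Nat.log2_lt (by omega)]; omega
      have hlt : Nat.log2 (2 ^ l + u) < l + 1 := by
        rw [Nat.log2_lt (by omega)]; omega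
      simp only [hlA, hval]
      omega
    · have hval : (⟨2 ^ l + u - 2, by omega⟩ : Fin D).1 + 2 = 2 ^ l + u := by
        simp; omega
      have hge : ¬ (Nat.log2 (2 ^ l + u) < l) := by
        rw [Nat.log2_lt (by omega)]; omega
      have hlt : Nat.log2 (2 ^ l + u) < l + 1 := by
        rw [Nat.log2_lt (by omega)]; omega
      simp only [hpA, hlA, hval]
      have : Nat.log2 (2 ^ l + u) = l := by omega
      rw [this]
      omega
  have decode_inj : ∀ a b : Fin D, lA a = lA b → pA a = pA b → a = b := by
    intro a b h1 h2
    have := ha_eq a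
    have := ha_eq b
    apply Fin.ext
    rw [h1, h2] at *
    omega
  -- the vectors
  set x : Fin (2 ^ m) → EuclideanSpace ℝ (Fin D) :=
    fun i => WithLp.toLp 2 (fun a => if pA a = i.1 / 2 ^ (m - lA a) then c else 0) with hx
  set y : Fin (2 ^ m) → EuclideanSpace ℝ (Fin D) :=
    fun j => WithLp.toLp 2 (fun a => if pA a = sib (j.1 / 2 ^ (m - lA a)) then
      (if pA a % 2 = 0 then c else -c) else 0) with hy
  -- norm bound
  have normle : ∀ (v : EuclideanSpace ℝ (Fin D)) (g : ℕ → ℕ),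
      (∀ a, v a ^ 2 ≤ if pA a = g (lA a) then c ^ 2 else 0) → ‖v‖ ≤ 1 := by
    intro v g hv
    rw [EuclideanSpace.norm_eq]
    have hcard : ((univ : Finset (Fin D)).filter (fun a => pA a = g (lA a))).card ≤ m := by
      have hinj : Set.InjOn lA ((univ : Finset (Fin D)).filter (fun a => pA a = g (lA a))) := by
        intro a ha b hb hab
        simp only [coe_filter, Set.mem_setOf_eq, mem_univ, true_and] at ha hb
        exact decode_inj a b hab (by rw [ha, hb, hab])
      have := Finset.card_le_card_of_injOn lA
        (fun a _ => Finset.mem_Icc.mpr ⟨hlA_ge a, hlA_le a⟩) hinj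
      simpa using this
    have h1 : ∑ a, ‖v a‖ ^ 2 ≤ ∑ a : Fin D, (if pA a = g (lA a) then c ^ 2 else 0) := by
      apply Finset.sum_le_sum
      intro a _
      simpa [sq_abs] using hv a
    have h2 : ∑ a : Fin D, (if pA a = g (lA a) then c ^ 2 else 0)
        = ((univ.filter fun a => pA a = g (lA a)).card : ℝ) * c ^ 2 := by
      rw [← Finset.sum_filter, Finset.sum_const, nsmul_eq_mul]
    have h3 : ((univ.filter fun a => pA a = g (lA a)).card : ℝ) * c ^ 2 ≤ m * c ^ 2 := by
      apply mul_le_mul_of_nonneg_right _ (by positivity)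
      exact_mod_cast hcard
    have h4 : (m : ℝ) * c ^ 2 = 1 := by
      rw [hc2]; field_simp
    have : ∑ a, ‖v a‖ ^ 2 ≤ 1 := by
      calc ∑ a, ‖v a‖ ^ 2 ≤ _ := h1
        _ = _ := h2
        _ ≤ (m : ℝ) * c ^ 2 := h3
        _ = 1 := h4
    calc Real.sqrt (∑ a, ‖v a‖ ^ 2) ≤ Real.sqrt 1 := Real.sqrt_le_sqrt this
      _ = 1 := Real.sqrt_one
  refine ⟨x, y, ?_, ?_, ?_⟩
  · intro i
    apply normle (x i) (fun l => i.1 / 2 ^ (m - l))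
    intro a
    simp only [hx, PiLp.toLp_apply]
    split <;> norm_num
  · intro j
    apply normle (y j) (fun l => sib (j.1 / 2 ^ (m - l)))
    intro a
    simp only [hy, PiLp.toLp_apply]
    split
    · split <;> simp [neg_pow]
    · simp
  · intro i j hij
    rw [Fin.lt_def] at hij
    obtain ⟨s, hsm, hjs, his⟩ := exists_sib m i.1 j.1 j.2 hij
    set u := i.1 / 2 ^ s with hu
    set v := j.1 / 2 ^ s with hv
    set l := m - s with hl
    have hls : m - l = s := by omega
    have hdivlt : ∀ n : ℕ, n < 2 ^ m → n / 2 ^ s < 2 ^ l := by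
      intro n hn
      rw [Nat.div_lt_iff_lt_mul (Nat.pow_pos (n := s) (by norm_num)), ← pow_add]
      have : l + s = m := by omega
      rw [this]
      exact hn
    have hult : u < 2 ^ l := hdivlt i.1 (lt_trans hij j.2)
    have hvlt : v < 2 ^ l := hdivlt j.1 j.2
    obtain ⟨a₀, ha₀l, ha₀p⟩ := encode l u (by omega) (by omega) hult
    obtain ⟨a₁, ha₁l, ha₁p⟩ := encode l v (by omega) (by omega) hvlt
    -- the two inner products
    have hinner : ∀ w z : EuclideanSpace ℝ (Fin D), ⟪w, z⟫ = ∑ a, w a * z a := by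
      intro w z
      simp [PiLp.inner_apply, RCLike.inner_apply, conj_trivial]
      exact Finset.sum_congr rfl fun _ _ => mul_comm _ _
    have hsibv : sib v = u := by rw [hjs]; exact sib_of_even his
    have hsibu : sib u = v := by rw [hjs]; exact sib_of_even' his
    have sum1 : ⟪x i, y j⟫ = c * c := by
      rw [hinner]
      rw [Finset.sum_eq_single a₀]
      · simp only [hx, hy, PiLp.toLp_apply, ha₀l, ha₀p, hls]
        rw [if_pos hu,
          if_pos (show u = sib (j.1 / 2 ^ s) by rw [← hv, hsibv]), if_pos his]
      · intro b _ hb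
        simp only [hx, hy, PiLp.toLp_apply]
        by_cases h1 : pA b = i.1 / 2 ^ (m - lA b)
        · by_cases h2 : pA b = sib (j.1 / 2 ^ (m - lA b))
          · exfalso
            have hs' : m - lA b = s := sib_uniq (h1 ▸ h2) (by rw [← hu, ← hv, ← hsibv, hjs])
            have hlb : lA b = l := by have := hlA_le b; omega
            exact hb (decode_inj b a₀ (by rw [hlb, ha₀l])
              (by rw [h1, hs', ha₀p]))
          · rw [if_neg h2, mul_zero]
        · rw [if_neg h1, zero_mul]
      · intro h; exact absurd (Finset.mem_univ a₀) h
    have sum2 : ⟪x j, y i⟫ = c * (-c) := by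
      rw [hinner]
      rw [Finset.sum_eq_single a₁]
      · simp only [hx, hy, PiLp.toLp_apply, ha₁l, ha₁p, hls]
        rw [if_pos hv,
          if_pos (show v = sib (i.1 / 2 ^ s) by rw [← hu, hsibu]), if_neg (by omega)]
      · intro b _ hb
        simp only [hx, hy, PiLp.toLp_apply]
        by_cases h1 : pA b = j.1 / 2 ^ (m - lA b)
        · by_cases h2 : pA b = sib (i.1 / 2 ^ (m - lA b))
          · exfalso
            have hflip : i.1 / 2 ^ (m - lA b) = sib (j.1 / 2 ^ (m - lA b)) := by
              have := congrArg sib (h1 ▸ h2)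
              rw [sib_sib] at this
              exact this.symm
            have hs' : m - lA b = s := sib_uniq hflip (by rw [← hu, ← hv, ← hsibv, hjs])
            have hlb : lA b = l := by have := hlA_le b; omega
            exact hb (decode_inj b a₁ (by rw [hlb, ha₁l])
              (by rw [h1, hs', ha₁p]))
          · rw [if_neg h2, mul_zero]
        · rw [if_neg h1, zero_mul]
      · intro h; exact absurd (Finset.mem_univ a₁) h
    rw [sum1, sum2]
    have heps : ε ≤ 1 / (m : ℝ) := by
      rw [le_div_iff₀ hmpos]
      calc ε * m ≤ ε * (1 / ε) := mul_le_mul_of_nonneg_left hmε hε0.le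
        _ = 1 := by field_simp
    have : c * c - c * (-c) = 2 * c ^ 2 := by ring
    rw [this, hc2]
    have : 1 / (m : ℝ) ≤ 2 * (1 / m) := by
      have : 0 ≤ 1 / (m : ℝ) := by positivity
      linarith
    linarith
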